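/- arXiv:math/0106123 — 7 statements merged into one kernel-verified Lean document; each statement's English description precedes it below -/
import Mathlib

section
/- For every integer L ≥ 0, the numbers b_L(n) satisfy b_L(0) = 1 and the recurrence b_L(n+1) = ∑_{k=0}^{n} C(n,k) · C(n+1,k)^L · b_L(k) for all n ≥ 0, where C(m,j) denotes the binomial coefficient. -/
open PowerSeries Finset

/-- The series `₀F_L(1,…,1;z) − 1 = ∑_{k≥1} z^k/(k!)^{L+1}` over `ℚ`. -/
noncomputable def hypFsub1 (L : ℕ) : PowerSeries ℚ :=
  PowerSeries.mk fun k => if k = 0 then 0 else 1 / (k.factorial : ℚ) ^ (L + 1)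

/-- The exponential `exp f = ∑_{l≥0} f^l / l!` of a power series `f` with zero
constant term (for such `f`, `coeff n (f^l) = 0` for `l > n`, so the finite sum
below is the full exponential series). -/
noncomputable def expPS (f : PowerSeries ℚ) : PowerSeries ℚ :=
  PowerSeries.mk fun n =>
    ∑ l ∈ Finset.range (n + 1), PowerSeries.coeff n (f ^ l) / (l.factorial : ℚ)

/-- `b_L(n) = (n!)^{L+1} · [z^n] exp(₀F_L(z) − 1)`. -/
noncomputable def bL (L n : ℕ) : ℚ :=
  (n.factorial : ℚ) ^ (L + 1) * PowerSeries.coeff n (expPS (hypFsub1 L))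

/-- `S_L(n,l) = ((n!)^{L+1}/l!) · [z^n] (₀F_L(z) − 1)^l`, the generalized
Stirling numbers of the second kind of type `L`. -/
noncomputable def SL (L n l : ℕ) : ℚ :=
  (n.factorial : ℚ) ^ (L + 1) / (l.factorial : ℚ) *
    PowerSeries.coeff n (hypFsub1 L ^ l)

/-- The series `∑_{k≥p+1} z^k/(k!)^{L+1}` over `ℚ`. -/
noncomputable def hypFtail (L p : ℕ) : PowerSeries ℚ :=
  PowerSeries.mk fun k => if k ≤ p then 0 else 1 / (k.factorial : ℚ) ^ (L + 1)

/-- `b_L(p,n) = (n!)^{L+1} · [z^n] exp(∑_{k≥p+1} z^k/(k!)^{L+1})`. -/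
noncomputable def bLp (L p n : ℕ) : ℚ :=
  (n.factorial : ℚ) ^ (L + 1) * PowerSeries.coeff n (expPS (hypFtail L p))

lemma coeff_pow_eq_zero {f : PowerSeries ℚ} (hf : constantCoeff f = 0)
    {n l : ℕ} (h : n < l) : PowerSeries.coeff n (f ^ l) = 0 :=
  (PowerSeries.X_pow_dvd_iff.mp
    (pow_dvd_pow_of_dvd (PowerSeries.X_dvd_iff.mpr hf) l)) n h

lemma coeff_expPS_eq {f : PowerSeries ℚ} (hf : constantCoeff f = 0) {n m : ℕ} (h : n ≤ m) :
    PowerSeries.coeff n (expPS f) =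
      ∑ l ∈ Finset.range (m + 1), PowerSeries.coeff n (f ^ l) / (l.factorial : ℚ) := by
  rw [expPS, coeff_mk]
  refine Finset.sum_subset (Finset.range_subset_range.mpr (by omega)) fun l _ hl => ?_
  rw [coeff_pow_eq_zero hf (by simp only [Finset.mem_range] at hl; omega), zero_div]

lemma deriv_expPS {f : PowerSeries ℚ} (hf : constantCoeff f = 0) :
    d⁄dX ℚ (expPS f) = (d⁄dX ℚ f) * expPS f := by
  ext n
  rw [PowerSeries.coeff_derivative, PowerSeries.coeff_mul]
  have h1 : ∀ p ∈ antidiagonal n,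
      PowerSeries.coeff p.1 (d⁄dX ℚ f) * PowerSeries.coeff p.2 (expPS f)
        = ∑ l ∈ Finset.range (n + 1),
            PowerSeries.coeff p.1 (d⁄dX ℚ f) *
              (PowerSeries.coeff p.2 (f ^ l) / (l.factorial : ℚ)) := by
    intro p hp
    rw [coeff_expPS_eq hf (show p.2 ≤ n by
      have := Finset.HasAntidiagonal.mem_antidiagonal.mp hp; omega), Finset.mul_sum]
  rw [Finset.sum_congr rfl h1, Finset.sum_comm]
  have h2 : ∀ l ∈ Finset.range (n + 1),
      (∑ p ∈ antidiagonal n,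
        PowerSeries.coeff p.1 (d⁄dX ℚ f) *
          (PowerSeries.coeff p.2 (f ^ l) / (l.factorial : ℚ)))
        = PowerSeries.coeff (n + 1) (f ^ (l + 1)) / ((l + 1).factorial : ℚ) *
            ((n : ℚ) + 1) := by
    intro l _
    have hpow := (PowerSeries.derivative ℚ).leibniz_pow (a := f) (l + 1)
    simp only [Nat.add_sub_cancel, smul_eq_mul] at hpow
    have hco : PowerSeries.coeff n (f ^ l * d⁄dX ℚ f)
        = PowerSeries.coeff (n + 1) (f ^ (l + 1)) * ((n : ℚ) + 1) / ((l : ℚ) + 1) := by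
      have h5 := congrArg (PowerSeries.coeff n) hpow
      rw [PowerSeries.coeff_derivative, map_nsmul, nsmul_eq_mul] at h5
      push_cast at h5
      have h₂ : ((l : ℚ) + 1) ≠ 0 := by positivity
      field_simp
      linarith [h5]
    calc (∑ p ∈ antidiagonal n,
          PowerSeries.coeff p.1 (d⁄dX ℚ f) *
            (PowerSeries.coeff p.2 (f ^ l) / (l.factorial : ℚ)))
        = (∑ p ∈ antidiagonal n,
            PowerSeries.coeff p.2 (f ^ l) * PowerSeries.coeff p.1 (d⁄dX ℚ f))
            / (l.factorial : ℚ) := by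
          rw [Finset.sum_div]; exact Finset.sum_congr rfl fun p _ => by ring
      _ = PowerSeries.coeff n (f ^ l * d⁄dX ℚ f) / (l.factorial : ℚ) := by
          rw [PowerSeries.coeff_mul]
          congr 1
          rw [← Finset.Nat.sum_antidiagonal_swap]
          rfl
      _ = PowerSeries.coeff (n + 1) (f ^ (l + 1)) / ((l + 1).factorial : ℚ) *
            ((n : ℚ) + 1) := by
          rw [hco, Nat.factorial_succ]
          have h₁ : ((l.factorial : ℚ)) ≠ 0 := Nat.cast_ne_zero.mpr l.factorial_ne_zero
          have h₂ : ((l : ℚ) + 1) ≠ 0 := by positivity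
          field_simp
          push_cast; ring
  rw [Finset.sum_congr rfl h2, ← Finset.sum_mul]
  congr 1
  have h3 : PowerSeries.coeff (n + 1) (expPS f)
      = ∑ l ∈ Finset.range (n + 2),
          PowerSeries.coeff (n + 1) (f ^ l) / (l.factorial : ℚ) := by
    rw [expPS, coeff_mk]
  rw [h3, Finset.sum_range_succ']
  simp

lemma nat_id (L n k : ℕ) (hk : k ≤ n) :
    n.choose k * ((n + 1).choose k) ^ L * k.factorial ^ (L + 1) *
      (n - k + 1).factorial ^ (L + 1) * (n + 1)
      = (n + 1).factorial ^ (L + 1) * (n - k + 1) := by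
  have h1 : n.choose k * k.factorial * (n - k).factorial = n.factorial :=
    Nat.choose_mul_factorial_mul_factorial hk
  have h2 : (n + 1).choose k * k.factorial * (n - k + 1).factorial = (n + 1).factorial := by
    have h3 : n + 1 - k = n - k + 1 := by omega
    have := Nat.choose_mul_factorial_mul_factorial (show k ≤ n + 1 by omega)
    rwa [h3] at this
  have h4 : (n - k + 1).factorial = (n - k + 1) * (n - k).factorial := Nat.factorial_succ _
  calc n.choose k * ((n + 1).choose k) ^ L * k.factorial ^ (L + 1) *
        (n - k + 1).factorial ^ (L + 1) * (n + 1)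
      = ((n + 1).choose k * k.factorial * (n - k + 1).factorial) ^ L *
          (n.choose k * k.factorial * ((n - k + 1) * (n - k).factorial)) * (n + 1) := by
        rw [← h4]; ring
    _ = (n + 1).factorial ^ L * (n.choose k * k.factorial * (n - k).factorial) *
          ((n - k + 1) * (n + 1)) := by rw [h2]; ring
    _ = (n + 1).factorial ^ L * ((n + 1) * n.factorial) * (n - k + 1) := by rw [h1]; ring
    _ = (n + 1).factorial ^ (L + 1) * (n - k + 1) := by
        rw [pow_succ, Nat.factorial_succ]

/-- `b_L(0) = 1` and
`b_L(n+1) = ∑_{k=0}^{n} C(n,k) · C(n+1,k)^L · b_L(k)`. -/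
theorem stmt_0 (L : ℕ) :
    bL L 0 = 1 ∧
    ∀ n : ℕ, bL L (n + 1) =
      ∑ k ∈ Finset.range (n + 1),
        (n.choose k : ℚ) * ((n + 1).choose k : ℚ) ^ L * bL L k := by
  have hf : constantCoeff (hypFsub1 L) = 0 := by
    rw [← coeff_zero_eq_constantCoeff_apply, hypFsub1, coeff_mk, if_pos rfl]
  constructor
  · simp [bL, expPS, coeff_mk]
  · intro n
    have hc : PowerSeries.coeff (n + 1) (expPS (hypFsub1 L)) * ((n : ℚ) + 1) =
        ∑ k ∈ Finset.range (n + 1),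
          PowerSeries.coeff (n - k) (d⁄dX ℚ (hypFsub1 L)) *
            PowerSeries.coeff (n - (n - k)) (expPS (hypFsub1 L)) := by
      rw [← PowerSeries.coeff_derivative, deriv_expPS hf, PowerSeries.coeff_mul,
        Finset.Nat.sum_antidiagonal_eq_sum_range_succ
          (fun i j => PowerSeries.coeff i (d⁄dX ℚ (hypFsub1 L)) *
            PowerSeries.coeff j (expPS (hypFsub1 L))) n,
        ← Finset.sum_range_reflect]
      simp only [Nat.add_sub_cancel, Nat.succ_sub_succ, Nat.sub_zero]
    have hn1 : ((n : ℚ) + 1) ≠ 0 := by positivity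
    apply mul_right_cancel₀ hn1
    rw [bL, mul_assoc, hc, Finset.sum_mul, Finset.mul_sum]
    refine Finset.sum_congr rfl fun k hk => ?_
    have hkn : k ≤ n := by simp only [Finset.mem_range] at hk; omega
    have hnk : n - (n - k) = k := by omega
    rw [hnk, PowerSeries.coeff_derivative, bL]
    have hcoe : PowerSeries.coeff (n - k + 1) (hypFsub1 L)
        = 1 / ((n - k + 1).factorial : ℚ) ^ (L + 1) := by
      rw [hypFsub1, coeff_mk, if_neg (by omega)]
    rw [hcoe]
    have key : ((n + 1).factorial : ℚ) ^ (L + 1) *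
        (1 / ((n - k + 1).factorial : ℚ) ^ (L + 1) * (((n - k : ℕ) : ℚ) + 1))
        = (n.choose k : ℚ) * ((n + 1).choose k : ℚ) ^ L *
            ((k.factorial : ℚ) ^ (L + 1)) * ((n : ℚ) + 1) := by
      have hfac : (((n - k + 1).factorial : ℚ)) ^ (L + 1) ≠ 0 := by positivity
      rw [div_mul_eq_mul_div, one_mul, mul_div_assoc', div_eq_iff hfac]
      have := nat_id L n k hkn
      have hcast := congrArg (fun m : ℕ => (m : ℚ)) this
      push_cast at hcast ⊢
      linarith [hcast]
    calc ((n + 1).factorial : ℚ) ^ (L + 1) *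
          (1 / ((n - k + 1).factorial : ℚ) ^ (L + 1) * (((n - k : ℕ) : ℚ) + 1) *
            PowerSeries.coeff k (expPS (hypFsub1 L)))
        = ((n + 1).factorial : ℚ) ^ (L + 1) *
            (1 / ((n - k + 1).factorial : ℚ) ^ (L + 1) * (((n - k : ℕ) : ℚ) + 1)) *
            PowerSeries.coeff k (expPS (hypFsub1 L)) := by ring
      _ = (n.choose k : ℚ) * ((n + 1).choose k : ℚ) ^ L *
            ((k.factorial : ℚ) ^ (L + 1)) * ((n : ℚ) + 1) *
            PowerSeries.coeff k (expPS (hypFsub1 L)) := by rw [key]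
      _ = (n.choose k : ℚ) * ((n + 1).choose k : ℚ) ^ L *
            ((k.factorial : ℚ) ^ (L + 1) *
              PowerSeries.coeff k (expPS (hypFsub1 L))) * ((n : ℚ) + 1) := by ring
end

section
/- For every integer L ≥ 0, the numbers S_L(n,l) satisfy: S_L(0,0) = 1; S_L(n,0) = 0 for n > 0; S_L(n,l) = 0 whenever l > n; and for all l ≥ 1 and n ≥ 0, S_L(n+1,l) = ∑_{k=l−1}^{n} C(n,k) · C(n+1,k)^L · S_L(k,l−1), where C(m,j) denotes the binomial coefficient. -/
open PowerSeries Finset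

lemma coeff_hypFsub1_pow_eq_zero (L : ℕ) :
    ∀ l n : ℕ, n < l → PowerSeries.coeff n (hypFsub1 L ^ l) = 0 := by
  intro l
  induction l with
  | zero => intro n h; omega
  | succ l ih =>
    intro n h
    rw [pow_succ, PowerSeries.coeff_mul]
    apply Finset.sum_eq_zero
    rintro ⟨a, b⟩ hab
    rw [Finset.HasAntidiagonal.mem_antidiagonal] at hab
    rcases lt_or_ge a l with ha | ha
    · rw [ih a ha, zero_mul]
    · have hb : b = 0 := by omega
      subst hb
      simp [hypFsub1]

lemma derivId (L l n : ℕ) :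
    PowerSeries.coeff (n + 1) (hypFsub1 L ^ l) * (n + 1) =
      (l : ℚ) * ∑ k ∈ Finset.range (n + 1),
        PowerSeries.coeff k (hypFsub1 L ^ (l - 1)) *
          (((n - k + 1 : ℕ) : ℚ) / ((n - k + 1).factorial : ℚ) ^ (L + 1)) := by
  have h := Derivation.leibniz_pow (d⁄dX ℚ) (hypFsub1 L) l
  have h2 := congrArg (PowerSeries.coeff n) h
  rw [PowerSeries.coeff_derivative] at h2
  rw [h2, map_nsmul, nsmul_eq_mul, smul_eq_mul, PowerSeries.coeff_mul,
    Finset.Nat.sum_antidiagonal_eq_sum_range_succ_mk]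
  congr 1
  apply Finset.sum_congr rfl
  intro k hk
  rw [PowerSeries.coeff_derivative]
  simp only [hypFsub1, PowerSeries.coeff_mk, if_neg (Nat.succ_ne_zero (n - k))]
  push_cast
  ring

lemma keyNat (L n k : ℕ) (hk : k ≤ n) :
    ((n + 1).factorial) ^ (L + 1) * (n + 1 - k) =
      n.choose k * ((n + 1).choose k) ^ L * (k.factorial) ^ (L + 1) *
        ((n + 1 - k).factorial) ^ (L + 1) * (n + 1) := by
  have h1 : (n + 1).choose k * k.factorial * (n + 1 - k).factorial = (n + 1).factorial :=
    Nat.choose_mul_factorial_mul_factorial (by omega)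
  rw [← h1]
  have h2 : n.choose k * (n + 1) = (n + 1).choose k * (n + 1 - k) :=
    Nat.choose_mul_succ_eq n k
  calc ((n + 1).choose k * k.factorial * (n + 1 - k).factorial) ^ (L + 1) * (n + 1 - k)
      = ((n + 1).choose k) ^ L * (k.factorial) ^ (L + 1) * ((n + 1 - k).factorial) ^ (L + 1)
          * ((n + 1).choose k * (n + 1 - k)) := by ring
    _ = ((n + 1).choose k) ^ L * (k.factorial) ^ (L + 1) * ((n + 1 - k).factorial) ^ (L + 1)
          * (n.choose k * (n + 1)) := by rw [← h2]
    _ = _ := by ring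

lemma keyQ (L n k m : ℕ) (hk : k ≤ n) :
    ((n + 1).factorial : ℚ) ^ (L + 1) / ((m + 1).factorial : ℚ) *
        (((m : ℚ) + 1) * (((n + 1 - k : ℕ) : ℚ) / ((n + 1 - k).factorial : ℚ) ^ (L + 1)) /
          ((n : ℚ) + 1)) =
      (n.choose k : ℚ) * ((n + 1).choose k : ℚ) ^ L *
        ((k.factorial : ℚ) ^ (L + 1) / (m.factorial : ℚ)) := by
  have key := congrArg (fun x : ℕ => (x : ℚ)) (keyNat L n k hk)
  push_cast at key
  rw [Nat.factorial_succ m]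
  push_cast
  have h1 : ((m.factorial : ℚ)) ≠ 0 := Nat.cast_ne_zero.2 m.factorial_ne_zero
  have h2 : (((n + 1 - k).factorial : ℚ)) ≠ 0 := Nat.cast_ne_zero.2 (Nat.factorial_ne_zero _)
  have h3 : ((n : ℚ) + 1) ≠ 0 := by positivity
  have h4 : ((m : ℚ) + 1) ≠ 0 := by positivity
  field_simp
  linear_combination key

/-- boundary values and recurrence
`S_L(n+1,l) = ∑_{k=l−1}^{n} C(n,k) · C(n+1,k)^L · S_L(k,l−1)` for `l ≥ 1`. -/
theorem stmt_6 (L : ℕ) :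
    SL L 0 0 = 1 ∧
    (∀ n : ℕ, 0 < n → SL L n 0 = 0) ∧
    (∀ n l : ℕ, n < l → SL L n l = 0) ∧
    ∀ l : ℕ, 1 ≤ l → ∀ n : ℕ,
      SL L (n + 1) l =
        ∑ k ∈ Finset.Icc (l - 1) n,
          (n.choose k : ℚ) * ((n + 1).choose k : ℚ) ^ L * SL L k (l - 1) := by
  refine ⟨by simp [SL], fun n hn => ?_, fun n l h => ?_, fun l hl n => ?_⟩
  · simp [SL, PowerSeries.coeff_one, hn.ne']
  · simp [SL, coeff_hypFsub1_pow_eq_zero L l n h]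
  · obtain ⟨m, rfl⟩ : ∃ m, l = m + 1 := ⟨l - 1, by omega⟩
    simp only [Nat.add_sub_cancel]
    have hext : ∑ k ∈ Finset.Icc m n,
          (n.choose k : ℚ) * ((n + 1).choose k : ℚ) ^ L * SL L k m
        = ∑ k ∈ Finset.range (n + 1),
          (n.choose k : ℚ) * ((n + 1).choose k : ℚ) ^ L * SL L k m := by
      apply Finset.sum_subset
      · intro k hk
        rw [Finset.mem_Icc] at hk
        exact Finset.mem_range.2 (by omega)
      · intro k hk hk2
        rw [Finset.mem_range] at hk
        rw [Finset.mem_Icc] at hk2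
        have : k < m := by omega
        simp [SL, coeff_hypFsub1_pow_eq_zero L m k this]
    rw [hext]
    have hd := derivId L (m + 1) n
    simp only [Nat.add_sub_cancel] at hd
    have hn1 : ((n : ℚ) + 1) ≠ 0 := by positivity
    have hc : PowerSeries.coeff (n + 1) (hypFsub1 L ^ (m + 1)) =
        ((m : ℚ) + 1) * (∑ k ∈ Finset.range (n + 1),
          PowerSeries.coeff k (hypFsub1 L ^ m) *
            (((n - k + 1 : ℕ) : ℚ) / ((n - k + 1).factorial : ℚ) ^ (L + 1))) / ((n : ℚ) + 1) := by
      rw [eq_div_iff hn1, hd]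
      norm_cast
    unfold SL
    rw [hc, Finset.mul_sum, Finset.sum_div, Finset.mul_sum]
    apply Finset.sum_congr rfl
    intro k hk
    rw [Finset.mem_range] at hk
    have hkn : k ≤ n := by omega
    have hnk : n - k + 1 = n + 1 - k := by omega
    rw [hnk]
    have hq := keyQ L n k m hkn
    linear_combination (PowerSeries.coeff k (hypFsub1 L ^ m)) * hq
end

section
/- For every integer L ≥ 0 and all natural numbers n, l with 1 ≤ l ≤ n, the rational number S_L(n,l) is a positive integer. -/
open PowerSeries Finset

/- ### Auxiliary lemmas -/

lemma coeff_hyp (L k : ℕ) : PowerSeries.coeff k (hypFsub1 L)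
    = if k = 0 then 0 else 1 / (k.factorial : ℚ) ^ (L + 1) := by
  simp [hypFsub1]

lemma coeff_hyp_pow_eq_zero (L j m : ℕ) (h : m < j) :
    PowerSeries.coeff m (hypFsub1 L ^ j) = 0 := by
  have hX : (X : PowerSeries ℚ) ^ j ∣ hypFsub1 L ^ j :=
    pow_dvd_pow_of_dvd (X_dvd_iff.mpr (by simp [hypFsub1, constantCoeff_mk])) j
  exact X_pow_dvd_iff.mp hX m h

lemma ratio_aux (L : ℕ) (a b c F d e g : ℚ) (hb : b ≠ 0) (hc : c ≠ 0) (hd : d ≠ 0)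
    (he : e ≠ 0) (hg : g ≠ 0) (hF : F = g * a) (hdec : d = e * c) :
    a/(b*c) * (F/(b*d))^L = F^(L+1) * e / (g * b^(L+1) * d^(L+1)) := by
  have h1 : a/(b*c) = F * e / (g * b * d) := by
    subst hF hdec; field_simp
  rw [h1, div_pow, div_mul_div_comm]
  congr 1
  · ring
  · rw [mul_pow]; ring

lemma choose_aux (L k j : ℕ) :
    (((k+j).choose k : ℕ) : ℚ) * ((((k+j+1).choose k : ℕ)) : ℚ)^L =
      (((k+j+1).factorial : ℕ) : ℚ)^(L+1) * ((j+1 : ℕ) : ℚ) /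
        (((k+j+1 : ℕ) : ℚ) * (((k.factorial : ℕ)) : ℚ)^(L+1) *
          ((((j+1).factorial : ℕ)) : ℚ)^(L+1)) := by
  rw [Nat.cast_choose ℚ (Nat.le_add_right k j),
      Nat.cast_choose ℚ (by omega : k ≤ k + j + 1)]
  have h1 : k + j - k = j := by omega
  have h2 : k + j + 1 - k = j + 1 := by omega
  rw [h1, h2]
  have nz : ∀ a : ℕ, ((a.factorial : ℕ) : ℚ) ≠ 0 :=
    fun a => Nat.cast_ne_zero.mpr a.factorial_ne_zero
  exact ratio_aux L _ _ _ _ _ _ _ (nz k) (nz j) (nz (j+1))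
    (Nat.cast_ne_zero.mpr (by omega)) (Nat.cast_ne_zero.mpr (by omega))
    (by rw [show (k+j+1).factorial = (k+j+1) * (k+j).factorial from Nat.factorial_succ _,
          Nat.cast_mul])
    (by rw [show (j+1).factorial = (j+1) * j.factorial from Nat.factorial_succ _, Nat.cast_mul])

lemma coeff_derivativeFun' (f : PowerSeries ℚ) (k : ℕ) :
    PowerSeries.coeff k (PowerSeries.derivativeFun f) = PowerSeries.coeff (k+1) f * (k+1) :=
  PowerSeries.coeff_derivative f k

lemma derkey (L n m : ℕ) (hn : 1 ≤ n) :
    (n : ℚ) * PowerSeries.coeff n (hypFsub1 L ^ (m+1)) =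
      ((m:ℚ)+1) * ∑ k ∈ Finset.range n,
        PowerSeries.coeff k (hypFsub1 L ^ m) *
          PowerSeries.coeff (n-1-k) (PowerSeries.derivativeFun (hypFsub1 L)) := by
  have hle := (PowerSeries.derivative ℚ).leibniz_pow (a := hypFsub1 L) (m+1)
  simp only [Nat.add_sub_cancel] at hle
  have hfun : PowerSeries.derivativeFun (hypFsub1 L ^ (m+1)) =
      (m+1) • ((hypFsub1 L ^ m) • PowerSeries.derivativeFun (hypFsub1 L)) := hle
  have key := congrArg (PowerSeries.coeff (n-1)) hfun
  rw [coeff_derivativeFun', map_nsmul, smul_eq_mul, PowerSeries.coeff_mul,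
    Finset.Nat.sum_antidiagonal_eq_sum_range_succ_mk, Nat.succ_eq_add_one,
    show n - 1 + 1 = n from by omega,
    show ((n-1 : ℕ) : ℚ) + 1 = (n : ℚ) from by
      exact_mod_cast congrArg (Nat.cast : ℕ → ℚ) (by omega : n - 1 + 1 = n)] at key
  rw [mul_comm ((n:ℚ)) _, key, nsmul_eq_mul]
  push_cast
  ring

lemma SL_rec (L n m : ℕ) (hn : 1 ≤ n) :
    SL L n (m+1) = ∑ k ∈ Finset.range n,
      (((n-1).choose k * (n.choose k)^L : ℕ) : ℚ) * SL L k m := by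
  have hn0 : (n : ℚ) ≠ 0 := Nat.cast_ne_zero.mpr (by omega)
  have hcoeff : PowerSeries.coeff n (hypFsub1 L ^ (m+1)) =
      (n : ℚ)⁻¹ * (((m:ℚ)+1) * ∑ k ∈ Finset.range n,
        PowerSeries.coeff k (hypFsub1 L ^ m) *
          PowerSeries.coeff (n-1-k) (PowerSeries.derivativeFun (hypFsub1 L))) :=
    (eq_inv_mul_iff_mul_eq₀ hn0).mpr (derkey L n m hn)
  unfold SL
  rw [hcoeff]
  simp only [Finset.mul_sum]
  refine Finset.sum_congr rfl fun k hk => ?_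
  have hkn : k < n := Finset.mem_range.mp hk
  obtain ⟨j, rfl⟩ : ∃ j, n = k + j + 1 := ⟨n - k - 1, by omega⟩
  rw [show k + j + 1 - 1 - k = j from by omega,
    coeff_derivativeFun', coeff_hyp, if_neg (by omega : ¬ j + 1 = 0),
    show k + j + 1 - 1 = k + j from by omega, Nat.cast_mul, Nat.cast_pow, choose_aux]
  have nz : ∀ a : ℕ, ((a.factorial : ℕ) : ℚ) ≠ 0 :=
    fun a => Nat.cast_ne_zero.mpr a.factorial_ne_zero
  have nzk := nz k; have nzj1 := nz (j+1); have nzkj1 := nz (k+j+1); have nzm := nz m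
  have hm1 : ((m+1).factorial : ℚ) = ((m:ℚ)+1) * (m.factorial : ℚ) := by
    rw [Nat.factorial_succ]; push_cast; ring
  have hg : ((k+j+1 : ℕ) : ℚ) ≠ 0 := Nat.cast_ne_zero.mpr (by omega)
  have hm0 : ((m:ℚ)+1) ≠ 0 := by positivity
  have hj0 : ((j:ℚ)+1) ≠ 0 := by positivity
  rw [hm1]
  push_cast
  field_simp

/-- for `1 ≤ l ≤ n`, `S_L(n,l)` is a positive integer. -/
theorem stmt_7 (L n l : ℕ) (hl : 1 ≤ l) (hln : l ≤ n) :
    ∃ m : ℕ, 0 < m ∧ SL L n l = (m : ℚ) := by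
  induction l generalizing n with
  | zero => omega
  | succ p ih =>
    rcases Nat.eq_zero_or_pos p with rfl | hp
    · -- base case l = 1
      refine ⟨1, one_pos, ?_⟩
      unfold SL
      rw [pow_one, coeff_hyp, if_neg (by omega : ¬ n = 0)]
      have nz : ((n.factorial : ℕ) : ℚ) ≠ 0 := Nat.cast_ne_zero.mpr n.factorial_ne_zero
      rw [Nat.factorial_one]
      field_simp
      norm_num
    · -- inductive step
      have hrec := SL_rec L n p (by omega)
      have hterm : ∀ k, ∃ c : ℕ, SL L k p = (c : ℚ) ∧ (p ≤ k → 0 < c) := by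
        intro k
        by_cases hk : p ≤ k
        · obtain ⟨c, hc, hceq⟩ := ih k hp hk
          exact ⟨c, hceq, fun _ => hc⟩
        · refine ⟨0, ?_, fun h => absurd h hk⟩
          unfold SL
          rw [coeff_hyp_pow_eq_zero L p k (by omega), mul_zero, Nat.cast_zero]
      choose c hceq hcpos using hterm
      refine ⟨∑ k ∈ Finset.range n, ((n-1).choose k * (n.choose k)^L) * c k, ?_, ?_⟩
      · apply Finset.sum_pos' (fun i _ => Nat.zero_le _)
        refine ⟨n-1, Finset.mem_range.mpr (by omega), ?_⟩
        have h1 : 0 < c (n-1) := hcpos (n-1) (by omega)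
        have h2 : 0 < (n-1).choose (n-1) * (n.choose (n-1))^L :=
          Nat.mul_pos (by rw [Nat.choose_self]; omega)
            (pow_pos (Nat.choose_pos (by omega)) L)
        exact Nat.mul_pos h2 h1
      · rw [hrec, Nat.cast_sum]
        refine Finset.sum_congr rfl fun k _ => ?_
        rw [hceq k]
        push_cast
        ring
end

section
/- For every integer L ≥ 0 and every natural number n ≥ 0, S_L(n+2,n) = (n(n+1)(n+2)/24) · ((n+2)!/2)^L · ( 3(n−1)/2^L + 4/3^L ), where the right-hand side is computed in ℚ. -/
open PowerSeries Finset

open PowerSeries Finset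

noncomputable def uL (L : ℕ) : PowerSeries ℚ :=
  PowerSeries.mk fun k => 1 / ((k + 1).factorial : ℚ) ^ (L + 1)

lemma hypFsub1_eq (L : ℕ) : hypFsub1 L = PowerSeries.X * uL L := by
  ext k
  cases k with
  | zero => simp [hypFsub1, uL]
  | succ m => simp [hypFsub1, uL, PowerSeries.coeff_succ_X_mul]

lemma uL_c0 (L n : ℕ) : PowerSeries.coeff 0 (uL L ^ n) = 1 := by
  rw [PowerSeries.coeff_zero_eq_constantCoeff, map_pow]
  have : PowerSeries.constantCoeff (uL L) = 1 := by simp [uL]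
  simp [this]

lemma uL_c1 (L n : ℕ) :
    PowerSeries.coeff 1 (uL L ^ n) = n * (1 / 2 ^ (L + 1)) := by
  induction n with
  | zero => simp
  | succ m ih =>
    rw [pow_succ, PowerSeries.coeff_mul,
      Finset.Nat.sum_antidiagonal_eq_sum_range_succ_mk]
    rw [Finset.sum_range_succ, Finset.sum_range_succ, Finset.sum_range_zero]
    have h0 : PowerSeries.coeff 0 (uL L) = 1 := by simp [uL]
    have h1 : PowerSeries.coeff 1 (uL L) = 1 / 2 ^ (L + 1) := by
      simp [uL]
    simp only [Nat.sub_self, Nat.sub_zero, ih, uL_c0, h0, h1]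
    push_cast
    ring

lemma uL_c2 (L n : ℕ) :
    PowerSeries.coeff 2 (uL L ^ n) =
      n * (1 / 6 ^ (L + 1)) + (n.choose 2 : ℚ) * (1 / 2 ^ (L + 1)) ^ 2 := by
  induction n with
  | zero => simp
  | succ m ih =>
    rw [pow_succ, PowerSeries.coeff_mul,
      Finset.Nat.sum_antidiagonal_eq_sum_range_succ_mk]
    rw [Finset.sum_range_succ, Finset.sum_range_succ, Finset.sum_range_succ,
      Finset.sum_range_zero]
    have h0 : PowerSeries.coeff 0 (uL L) = 1 := by simp [uL]
    have h1 : PowerSeries.coeff 1 (uL L) = 1 / 2 ^ (L + 1) := by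
      simp [uL]
    have h2 : PowerSeries.coeff 2 (uL L) = 1 / 6 ^ (L + 1) := by
      simp [uL]; norm_num [Nat.factorial]
    have hc : ((m + 1).choose 2 : ℚ) = (m.choose 2 : ℚ) + m := by
      rw [Nat.choose_succ_succ]
      push_cast [Nat.choose_one_right]
      ring
    simp only [Nat.sub_self, Nat.sub_zero, ih, uL_c0, uL_c1, h0, h1, h2, hc]
    push_cast
    ring

/-- `S_L(n+2,n) = (n(n+1)(n+2)/24) · ((n+2)!/2)^L · (3(n−1)/2^L + 4/3^L)`. -/
theorem stmt_11 (L n : ℕ) :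
    SL L (n + 2) n =
      ((n : ℚ) * ((n : ℚ) + 1) * ((n : ℚ) + 2) / 24) *
        (((n + 2).factorial : ℚ) / 2) ^ L *
        (3 * ((n : ℚ) - 1) / 2 ^ L + 4 / 3 ^ L) := by
  have key : PowerSeries.coeff (n + 2) (hypFsub1 L ^ n) =
      PowerSeries.coeff 2 (uL L ^ n) := by
    rw [hypFsub1_eq, mul_pow, add_comm n 2, PowerSeries.coeff_X_pow_mul]
  rw [SL, key, uL_c2, Nat.cast_choose_two]
  have hfac : ((n + 2).factorial : ℚ) = ((n : ℚ) + 2) * ((n : ℚ) + 1) * (n.factorial : ℚ) := by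
    rw [show n + 2 = n + 1 + 1 from rfl, Nat.factorial_succ, Nat.factorial_succ]
    push_cast; ring
  have hn : (n.factorial : ℚ) ≠ 0 := Nat.cast_ne_zero.2 n.factorial_ne_zero
  rw [hfac]
  have h2 : (2 : ℚ) ≠ 0 := by norm_num
  have h3 : (3 : ℚ) ≠ 0 := by norm_num
  have h6 : (6 : ℚ) ^ (L + 1) = 2 ^ (L + 1) * 3 ^ (L + 1) := by
    rw [← mul_pow]; norm_num
  simp only [div_pow, mul_pow, h6]
  field_simp
  ring
end

section
/- For every integer L ≥ 0 and every natural number n ≥ 0, S_L(n+3,n) = (n(n+1)(n+2)(n+3)/48) · ((n+3)!/3)^L · ( n²(3/8)^L + n(1/4^{L−1} − 3^{L+1}/8^L) + (2 + 2·3^L)/8^L − 1/4^{L−1} ), where the right-hand side is computed in ℚ. -/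
open PowerSeries Finset

noncomputable def uPS (L : ℕ) : PowerSeries ℚ :=
  PowerSeries.mk fun k => 1 / ((k + 1).factorial : ℚ) ^ (L + 1)

lemma hypF_eq (L : ℕ) : hypFsub1 L = PowerSeries.X * uPS L := by
  ext k
  cases k with
  | zero => simp [hypFsub1, uPS]
  | succ k => simp [hypFsub1, uPS, PowerSeries.coeff_succ_X_mul]

lemma uc0 (L : ℕ) : PowerSeries.coeff 0 (uPS L) = 1 := by
  simp [uPS]

lemma uc1 (L : ℕ) : PowerSeries.coeff 1 (uPS L) = 1 / (2 : ℚ) ^ (L + 1) := by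
  simp [uPS]

lemma uc2 (L : ℕ) : PowerSeries.coeff 2 (uPS L) = 1 / (6 : ℚ) ^ (L + 1) := by
  simp [uPS]; norm_num [Nat.factorial]

lemma uc3 (L : ℕ) : PowerSeries.coeff 3 (uPS L) = 1 / (24 : ℚ) ^ (L + 1) := by
  simp [uPS]; norm_num [Nat.factorial]

lemma u0 (L n : ℕ) : PowerSeries.coeff 0 (uPS L ^ n) = 1 := by
  rw [PowerSeries.coeff_zero_eq_constantCoeff, map_pow]
  simp [uPS]

lemma u1 (L n : ℕ) :
    PowerSeries.coeff 1 (uPS L ^ n) = n * (1 / (2 : ℚ) ^ (L + 1)) := by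
  induction n with
  | zero => simp
  | succ n ih =>
    rw [pow_succ, PowerSeries.coeff_mul,
      Finset.Nat.sum_antidiagonal_eq_sum_range_succ_mk]
    simp only [Finset.sum_range_succ, Finset.sum_range_zero]
    norm_num [ih, u0, uc0, uc1]
    ring

lemma u2 (L n : ℕ) :
    PowerSeries.coeff 2 (uPS L ^ n) =
      n * (1 / (6 : ℚ) ^ (L + 1)) +
        (n * (n - 1) / 2) * (1 / (2 : ℚ) ^ (L + 1)) ^ 2 := by
  induction n with
  | zero => simp
  | succ n ih =>
    rw [pow_succ, PowerSeries.coeff_mul,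
      Finset.Nat.sum_antidiagonal_eq_sum_range_succ_mk]
    simp only [Finset.sum_range_succ, Finset.sum_range_zero]
    norm_num [ih, u0, u1, uc0, uc1, uc2]
    ring

lemma u3 (L n : ℕ) :
    PowerSeries.coeff 3 (uPS L ^ n) =
      n * (1 / (24 : ℚ) ^ (L + 1)) +
        n * (n - 1) * (1 / (2 : ℚ) ^ (L + 1)) * (1 / (6 : ℚ) ^ (L + 1)) +
        (n * (n - 1) * (n - 2) / 6) * (1 / (2 : ℚ) ^ (L + 1)) ^ 3 := by
  induction n with
  | zero => simp
  | succ n ih =>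
    rw [pow_succ, PowerSeries.coeff_mul,
      Finset.Nat.sum_antidiagonal_eq_sum_range_succ_mk]
    simp only [Finset.sum_range_succ, Finset.sum_range_zero]
    norm_num [ih, u0, u1, u2, uc0, uc1, uc2, uc3]
    ring

lemma coeff_main (L n : ℕ) :
    PowerSeries.coeff (n + 3) (hypFsub1 L ^ n) =
      PowerSeries.coeff 3 (uPS L ^ n) := by
  rw [hypF_eq, mul_pow, add_comm n 3, PowerSeries.coeff_X_pow_mul]

theorem aux13 (L n : ℕ) :
    (((n+3).factorial : ℚ) ^ (L + 1) / (n.factorial : ℚ) *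
      PowerSeries.coeff (n + 3) (hypFsub1 L ^ n)) =
      ((n : ℚ) * ((n : ℚ) + 1) * ((n : ℚ) + 2) * ((n : ℚ) + 3) / 48) *
        (((n + 3).factorial : ℚ) / 3) ^ L *
        ((n : ℚ) ^ 2 * ((3 : ℚ) / 8) ^ L +
          (n : ℚ) * (1 / (4 : ℚ) ^ ((L : ℤ) - 1) - (3 : ℚ) ^ (L + 1) / 8 ^ L) +
          (2 + 2 * (3 : ℚ) ^ L) / 8 ^ L - 1 / (4 : ℚ) ^ ((L : ℤ) - 1)) := by
  rw [coeff_main, u3]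
  have hfac : ((n+3).factorial : ℚ) ^ (L+1) =
      (((n:ℚ)+1)*((n:ℚ)+2)*((n:ℚ)+3)) * (n.factorial : ℚ) *
        ((n+3).factorial : ℚ) ^ L := by
    rw [pow_succ]
    have : ((n+3).factorial : ℚ) = (((n:ℚ)+1)*((n:ℚ)+2)*((n:ℚ)+3)) * (n.factorial : ℚ) := by
      have h : (n+3).factorial = (n+3)*((n+2)*((n+1)*n.factorial)) := by
        rw [show n+3 = n+2+1 from rfl, Nat.factorial_succ, show n+2 = n+1+1 from rfl,
          Nat.factorial_succ, Nat.factorial_succ]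
      rw [h]; push_cast; ring
    rw [this]; ring
  have h4 : (1 : ℚ) / (4 : ℚ) ^ ((L : ℤ) - 1) = 4 / ((2:ℚ)^L)^2 := by
    rw [zpow_sub₀ (by norm_num : (4:ℚ) ≠ 0), zpow_natCast, zpow_one]
    have : (4:ℚ)^L = ((2:ℚ)^L)^2 := by
      rw [← pow_mul, mul_comm, pow_mul]; norm_num
    rw [this]; ring
  have h8 : (8:ℚ)^L = ((2:ℚ)^L)^3 := by
    rw [← pow_mul, mul_comm, pow_mul]; norm_num
  have h6 : (6:ℚ)^L = (2:ℚ)^L * (3:ℚ)^L := by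
    rw [← mul_pow]; norm_num
  have h24 : (24:ℚ)^L = ((2:ℚ)^L)^3 * (3:ℚ)^L := by
    rw [show (24:ℚ) = 8*3 by norm_num, mul_pow, h8]
  have h38 : ((3:ℚ)/8)^L = (3:ℚ)^L / ((2:ℚ)^L)^3 := by
    rw [div_pow, h8]
  have hF3 : (((n + 3).factorial : ℚ) / 3) ^ L = ((n+3).factorial : ℚ)^L / (3:ℚ)^L :=
    div_pow _ _ _
  rw [hfac, h4, h38, hF3]
  rw [pow_succ (6:ℚ), pow_succ (2:ℚ), pow_succ (24:ℚ), pow_succ (3:ℚ), h6, h8, h24]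
  have hx : (2:ℚ)^L ≠ 0 := pow_ne_zero _ (by norm_num)
  have hy : (3:ℚ)^L ≠ 0 := pow_ne_zero _ (by norm_num)
  have hnf : (n.factorial : ℚ) ≠ 0 := Nat.cast_ne_zero.2 n.factorial_ne_zero
  field_simp
  ring

theorem stmt_13 (L n : ℕ) :
    SL L (n + 3) n =
      ((n : ℚ) * ((n : ℚ) + 1) * ((n : ℚ) + 2) * ((n : ℚ) + 3) / 48) *
        (((n + 3).factorial : ℚ) / 3) ^ L *
        ((n : ℚ) ^ 2 * ((3 : ℚ) / 8) ^ L +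
          (n : ℚ) * (1 / (4 : ℚ) ^ ((L : ℤ) - 1) - (3 : ℚ) ^ (L + 1) / 8 ^ L) +
          (2 + 2 * (3 : ℚ) ^ L) / 8 ^ L - 1 / (4 : ℚ) ^ ((L : ℤ) - 1)) := by
  rw [SL]
  exact aux13 L n
end

section
/- Let D be the operator on polynomials over ℚ given by D(P) = X · P'. Then for all natural numbers n ≥ l ≥ 1, the conventional Stirling number of the second kind satisfies S_0(n,l) = ((−1)^l / l!) · ( D^n( (1−X)^l − 1 ) evaluated at X = 1 ). -/
open PowerSeries Finset

private noncomputable def DD (P : Polynomial ℚ) : Polynomial ℚ :=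
  Polynomial.X * Polynomial.derivative P

private lemma DD_add (P Q : Polynomial ℚ) : DD (P + Q) = DD P + DD Q := by
  simp [DD, mul_add]

private lemma DDiter_add (n : ℕ) (P Q : Polynomial ℚ) :
    DD^[n] (P + Q) = DD^[n] P + DD^[n] Q := by
  induction n generalizing P Q with
  | zero => simp
  | succ n ih => simp [Function.iterate_succ_apply, DD_add, ih]

private lemma DDiter_monomial (n m : ℕ) (c : ℚ) :
    DD^[n] (Polynomial.C c * Polynomial.X ^ m) =
      Polynomial.C (c * (m : ℚ) ^ n) * Polynomial.X ^ m := by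
  induction n generalizing c with
  | zero => simp
  | succ n ih =>
    rw [Function.iterate_succ_apply]
    have h : DD (Polynomial.C c * Polynomial.X ^ m) =
        Polynomial.C (c * m) * Polynomial.X ^ m := by
      cases m with
      | zero => simp [DD]
      | succ m =>
        simp only [DD, Polynomial.derivative_C_mul, Polynomial.derivative_X_pow,
          Nat.add_sub_cancel]
        rw [Polynomial.C_mul, pow_succ]
        push_cast
        ring
    rw [h, ih (c * m), show c * (m : ℚ) * (m : ℚ) ^ n = c * (m : ℚ) ^ (n + 1) by ring]

private lemma DDiter_zero (n : ℕ) : DD^[n] (0 : Polynomial ℚ) = 0 := by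
  induction n with
  | zero => rfl
  | succ n ih => rw [Function.iterate_succ_apply]; simp [DD]; exact ih

private lemma DDiter_sum (n : ℕ) (s : Finset ℕ) (f : ℕ → Polynomial ℚ) :
    DD^[n] (∑ i ∈ s, f i) = ∑ i ∈ s, DD^[n] (f i) := by
  induction s using Finset.induction_on with
  | empty => simp [DDiter_zero]
  | insert a s h ih => rw [Finset.sum_insert h, DDiter_add, ih, Finset.sum_insert h]

private lemma hyp0 : hypFsub1 0 = PowerSeries.exp ℚ - 1 := by
  ext k
  rw [hypFsub1, PowerSeries.coeff_mk, map_sub, PowerSeries.coeff_exp]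
  cases k with
  | zero => simp
  | succ k => simp [PowerSeries.coeff_one]

private lemma coeff_exp_sub_one_pow (n l : ℕ) :
    PowerSeries.coeff n ((PowerSeries.exp ℚ - 1) ^ l) =
      ∑ m ∈ Finset.range (l + 1),
        (-1 : ℚ) ^ (m + l) * (l.choose m : ℚ) * (m : ℚ) ^ n / (n.factorial : ℚ) := by
  rw [sub_pow, map_sum]
  refine Finset.sum_congr rfl fun m _ => ?_
  rw [one_pow, PowerSeries.exp_pow_eq_rescale_exp, mul_one]
  have h1 : ((-1 : ℚ⟦X⟧) ^ (m + l)) = PowerSeries.C ((-1 : ℚ) ^ (m + l)) := by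
    rw [map_pow, map_neg, map_one]
  have h2 : ((l.choose m : ℚ⟦X⟧)) = PowerSeries.C ((l.choose m : ℚ)) := by
    simp
  rw [h1, h2, mul_comm _ (PowerSeries.C ((l.choose m : ℚ))), ← mul_assoc, ← map_mul,
    PowerSeries.coeff_C_mul, PowerSeries.coeff_rescale, PowerSeries.coeff_exp]
  simp only [Algebra.algebraMap_self, RingHom.id_apply]
  ring

private lemma poly_eq (l : ℕ) :
    (1 - Polynomial.X : Polynomial ℚ) ^ l - 1 =
      (∑ m ∈ Finset.range (l + 1),
          Polynomial.C ((-1 : ℚ) ^ m * (l.choose m : ℚ)) * Polynomial.X ^ m) +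
        Polynomial.C (-1 : ℚ) * Polynomial.X ^ 0 := by
  rw [show (1 - Polynomial.X : Polynomial ℚ) = -Polynomial.X + 1 by ring, add_pow]
  rw [show (Polynomial.C (-1 : ℚ) * Polynomial.X ^ 0) = -1 by simp]
  rw [sub_eq_add_neg]
  congr 1
  refine Finset.sum_congr rfl fun m _ => ?_
  rw [one_pow, mul_one, neg_pow, Polynomial.C_mul]
  rw [show Polynomial.C ((-1 : ℚ) ^ m) = (-1 : Polynomial ℚ) ^ m by
    rw [map_pow, map_neg, map_one]]
  rw [Polynomial.C_eq_natCast]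
  ring

/-- for the Euler operator `D P = X · P'` on `ℚ[X]` and `n ≥ l ≥ 1`,
`S_0(n,l) = ((−1)^l / l!) · (Dⁿ((1 − X)^l − 1))(1)`. -/
theorem stmt_16 (n l : ℕ) (hl : 1 ≤ l) (hln : l ≤ n) :
    SL 0 n l =
      ((-1 : ℚ) ^ l / (l.factorial : ℚ)) *
        Polynomial.eval 1
          ((fun P : Polynomial ℚ => Polynomial.X * Polynomial.derivative P)^[n]
            ((1 - Polynomial.X) ^ l - 1)) := by
  have hD : (fun P : Polynomial ℚ => Polynomial.X * Polynomial.derivative P) = DD := rfl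
  have hn1 : 1 ≤ n := le_trans hl hln
  have heval : Polynomial.eval 1
      (DD^[n] ((1 - Polynomial.X : Polynomial ℚ) ^ l - 1)) =
      ∑ m ∈ Finset.range (l + 1), (-1 : ℚ) ^ m * (l.choose m : ℚ) * (m : ℚ) ^ n := by
    rw [poly_eq, DDiter_add, DDiter_sum, DDiter_monomial, Polynomial.eval_add,
      Polynomial.eval_finset_sum]
    have h0 : (((0 : ℕ) : ℚ)) ^ n = 0 := by
      rw [Nat.cast_zero]; exact zero_pow (by omega)
    rw [h0]
    simp only [mul_zero, map_zero, zero_mul, pow_zero, mul_one, Polynomial.eval_zero, add_zero]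
    refine Finset.sum_congr rfl fun m _ => ?_
    rw [DDiter_monomial]
    simp
  rw [hD, heval, SL, hyp0, coeff_exp_sub_one_pow, pow_one, Finset.mul_sum, Finset.mul_sum]
  refine Finset.sum_congr rfl fun m _ => ?_
  have hnf : (n.factorial : ℚ) ≠ 0 := Nat.cast_ne_zero.mpr n.factorial_ne_zero
  have hlf : (l.factorial : ℚ) ≠ 0 := Nat.cast_ne_zero.mpr l.factorial_ne_zero
  rw [pow_add]
  field_simp
end

section
/- For all integers L ≥ 0 and p ≥ 0, the numbers b_L(p,n) satisfy: b_L(p,0) = 1; b_L(p,k) = 0 for 1 ≤ k ≤ p; b_L(p,p+1) = 1; and for every n ≥ p, b_L(p,n+1) = ∑_{k=0}^{n−p} C(n,k) · C(n+1,k)^L · b_L(p,k), where C(m,j) denotes the binomial coefficient. -/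
open PowerSeries Finset

lemma hf0 (L p m : ℕ) (h : m ≤ p) : coeff m (hypFtail L p) = 0 := by
  simp [hypFtail, h]

lemma hpow (L p l k : ℕ) (h : k < l * (p + 1)) : coeff k ((hypFtail L p) ^ l) = 0 := by
  have hdvd : (X : ℚ⟦X⟧) ^ (p + 1) ∣ hypFtail L p :=
    X_pow_dvd_iff.2 fun m hm => hf0 L p m (by omega)
  have hdvd2 : (X : ℚ⟦X⟧) ^ ((p + 1) * l) ∣ (hypFtail L p) ^ l := by
    rw [pow_mul]
    exact pow_dvd_pow_of_dvd hdvd l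
  exact X_pow_dvd_iff.1 hdvd2 k (by rwa [Nat.mul_comm])

lemma hpow1 (L p l k : ℕ) (h : k < l) : coeff k ((hypFtail L p) ^ l) = 0 := by
  refine hpow L p l k (lt_of_lt_of_le h ?_)
  calc l = l * 1 := (mul_one l).symm
    _ ≤ l * (p + 1) := Nat.mul_le_mul_left l (by omega)

lemma coeffE (L p n N : ℕ) (h : n < N) :
    coeff n (expPS (hypFtail L p)) =
      ∑ l ∈ Finset.range N, coeff n ((hypFtail L p) ^ l) / (l.factorial : ℚ) := by
  rw [expPS, coeff_mk]
  refine Finset.sum_subset (Finset.range_subset_range.2 (by omega)) ?_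
  intro l hl hnl
  simp only [Finset.mem_range, not_lt] at hnl
  rw [hpow1 L p l n (by omega), zero_div]

lemma mainrec (L p n : ℕ) :
    ((n : ℚ) + 1) * coeff (n + 1) (expPS (hypFtail L p)) =
      ∑ k ∈ Finset.range (n + 1),
        coeff k (expPS (hypFtail L p)) *
          (coeff (n - k + 1) (hypFtail L p) * ((n - k : ℕ) + 1)) := by
  set f := hypFtail L p with hf
  have step1 : ((n : ℚ) + 1) * coeff (n + 1) (expPS f) =
      ∑ i ∈ Finset.range (n + 1),
        coeff n (f ^ i * (d⁄dX ℚ f)) / (i.factorial : ℚ) := by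
    rw [coeffE L p (n + 1) (n + 2) (by omega), Finset.mul_sum, Finset.sum_range_succ']
    have h0 : ((n : ℚ) + 1) * (coeff (n + 1) (f ^ 0) / ((0 : ℕ).factorial : ℚ)) = 0 := by
      simp
    rw [h0, add_zero]
    refine Finset.sum_congr rfl fun i _ => ?_
    have hder : coeff n (d⁄dX ℚ (f ^ (i + 1))) = coeff (n + 1) (f ^ (i + 1)) * ((n : ℚ) + 1) := by
      have := coeff_derivative (f ^ (i + 1)) n
      push_cast at this ⊢
      exact this
    have hleib : d⁄dX ℚ (f ^ (i + 1)) = (i + 1) • (f ^ i • d⁄dX ℚ f) := by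
      have := Derivation.leibniz_pow (d⁄dX ℚ) (a := f) (i + 1)
      simpa using this
    have hco : coeff (n + 1) (f ^ (i + 1)) * ((n : ℚ) + 1) =
        ((i : ℚ) + 1) * coeff n (f ^ i * (d⁄dX ℚ f)) := by
      rw [← hder, hleib, map_nsmul]
      simp only [smul_eq_mul, nsmul_eq_mul]
      push_cast
      ring
    have hfac : ((i + 1).factorial : ℚ) = ((i : ℚ) + 1) * (i.factorial : ℚ) := by
      rw [Nat.factorial_succ]; push_cast; ring
    have hi1 : ((i : ℚ) + 1) ≠ 0 := by positivity
    have hifac : (i.factorial : ℚ) ≠ 0 := Nat.cast_ne_zero.2 i.factorial_ne_zero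
    field_simp [hfac]
    linear_combination (i.factorial : ℚ) * hco - coeff n (f ^ i * (d⁄dX ℚ f)) * hfac
  rw [step1]
  have step2 : ∀ i ∈ Finset.range (n + 1),
      coeff n (f ^ i * (d⁄dX ℚ f)) / (i.factorial : ℚ) =
        ∑ k ∈ Finset.range (n + 1),
          coeff k (f ^ i) / (i.factorial : ℚ) * (coeff (n - k + 1) f * ((n - k : ℕ) + 1)) := by
    intro i _
    rw [coeff_mul, Finset.Nat.sum_antidiagonal_eq_sum_range_succ_mk, Finset.sum_div]
    refine Finset.sum_congr rfl fun k _ => ?_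
    rw [coeff_derivative]
    push_cast
    ring
  rw [Finset.sum_congr rfl step2, Finset.sum_comm]
  refine Finset.sum_congr rfl fun k hk => ?_
  rw [← Finset.sum_mul, ← coeffE L p k (n + 1) (Finset.mem_range.1 hk)]

lemma natkey (L n k : ℕ) (hk : k ≤ n) :
    ((n + 1).factorial) ^ (L + 1) * (n - k + 1) =
      (n + 1) * n.choose k * ((n + 1).choose k) ^ L * (k.factorial) ^ (L + 1) *
        ((n - k + 1).factorial) ^ (L + 1) := by
  have h3 : n + 1 - k = n - k + 1 := by omega
  have h2 : (n + 1).factorial = (n + 1).choose k * (k.factorial * (n - k + 1).factorial) := by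
    have := Nat.choose_mul_factorial_mul_factorial (show k ≤ n + 1 by omega)
    rw [h3] at this
    rw [← this]; ring
  have key : (n + 1).choose k * (n - k + 1) = (n + 1) * n.choose k := by
    rw [← h3, ← Nat.choose_mul_succ_eq, Nat.mul_comm]
  calc ((n + 1).factorial) ^ (L + 1) * (n - k + 1)
      = ((n + 1).choose k * (k.factorial * (n - k + 1).factorial)) ^ (L + 1) * (n - k + 1) := by
        rw [← h2]
    _ = ((n + 1).choose k * (n - k + 1)) *
          (((n + 1).choose k) ^ L * ((k.factorial) ^ (L + 1) * ((n - k + 1).factorial) ^ (L + 1))) := by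
        ring
    _ = ((n + 1) * n.choose k) *
          (((n + 1).choose k) ^ L * ((k.factorial) ^ (L + 1) * ((n - k + 1).factorial) ^ (L + 1))) := by
        rw [key]
    _ = _ := by ring

lemma part4 (L p : ℕ) : ∀ n : ℕ, p ≤ n →
    bLp L p (n + 1) =
      ∑ k ∈ Finset.range (n - p + 1),
        (n.choose k : ℚ) * ((n + 1).choose k : ℚ) ^ L * bLp L p k := by
  intro n hn
  have hn1 : ((n : ℚ) + 1) ≠ 0 := by positivity
  refine mul_left_cancel₀ hn1 ?_
  have key := mainrec L p n
  have hrestrict : ∑ k ∈ Finset.range (n + 1),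
      coeff k (expPS (hypFtail L p)) *
        (coeff (n - k + 1) (hypFtail L p) * ((n - k : ℕ) + 1)) =
      ∑ k ∈ Finset.range (n - p + 1),
        coeff k (expPS (hypFtail L p)) *
          (coeff (n - k + 1) (hypFtail L p) * ((n - k : ℕ) + 1)) := by
    refine (Finset.sum_subset (Finset.range_subset_range.2 (by omega)) ?_).symm
    intro k hk hnk
    simp only [Finset.mem_range, not_lt] at hk hnk
    rw [hf0 L p (n - k + 1) (by omega), zero_mul, mul_zero]
  calc ((n : ℚ) + 1) * bLp L p (n + 1)
      = ((n + 1).factorial : ℚ) ^ (L + 1) *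
          (((n : ℚ) + 1) * coeff (n + 1) (expPS (hypFtail L p))) := by
        rw [bLp]; ring
    _ = ((n + 1).factorial : ℚ) ^ (L + 1) *
          ∑ k ∈ Finset.range (n - p + 1),
            coeff k (expPS (hypFtail L p)) *
              (coeff (n - k + 1) (hypFtail L p) * ((n - k : ℕ) + 1)) := by
        rw [key, hrestrict]
    _ = ∑ k ∈ Finset.range (n - p + 1),
          ((n + 1).factorial : ℚ) ^ (L + 1) *
            (coeff k (expPS (hypFtail L p)) *
              (coeff (n - k + 1) (hypFtail L p) * ((n - k : ℕ) + 1))) := by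
        rw [Finset.mul_sum]
    _ = _ := by
        rw [Finset.mul_sum]
        refine Finset.sum_congr rfl fun k hk => ?_
        have hkr : k < n - p + 1 := Finset.mem_range.1 hk
        have hkn : k ≤ n := by omega
        have hcoef : coeff (n - k + 1) (hypFtail L p) =
            1 / ((n - k + 1).factorial : ℚ) ^ (L + 1) := by
          rw [hypFtail, coeff_mk, if_neg (by omega)]
        rw [bLp, hcoef]
        have key' : (((n + 1).factorial : ℚ)) ^ (L + 1) * (((n - k : ℕ) : ℚ) + 1) =
            ((n : ℚ) + 1) * (n.choose k : ℚ) * ((n + 1).choose k : ℚ) ^ L *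
              (k.factorial : ℚ) ^ (L + 1) * ((n - k + 1).factorial : ℚ) ^ (L + 1) := by
          exact_mod_cast congrArg (Nat.cast : ℕ → ℚ) (natkey L n k hkn)
        have hne : ((n - k + 1).factorial : ℚ) ^ (L + 1) ≠ 0 := by positivity
        have hcast : ((n - k : ℕ) : ℚ) = (n : ℚ) - (k : ℚ) := Nat.cast_sub hkn
        field_simp
        linear_combination (coeff k (expPS (hypFtail L p))) * key'

lemma part1 (L p : ℕ) : bLp L p 0 = 1 := by
  simp [bLp, expPS, coeff_mk]

lemma part2 (L p : ℕ) : ∀ k : ℕ, 1 ≤ k → k ≤ p → bLp L p k = 0 := by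
  intro k h1 h2
  rw [bLp, expPS, coeff_mk]
  have hz : ∀ l ∈ Finset.range (k + 1),
      coeff k ((hypFtail L p) ^ l) / (l.factorial : ℚ) = 0 := by
    intro l _
    rcases Nat.eq_zero_or_pos l with hl | hl
    · subst hl
      rw [pow_zero, coeff_one, if_neg (by omega), zero_div]
    · rw [hpow L p l k (by nlinarith), zero_div]
  rw [Finset.sum_eq_zero hz, mul_zero]

lemma part3 (L p : ℕ) : bLp L p (p + 1) = 1 := by
  rw [part4 L p p le_rfl]
  simp [part1]


/-- `b_L(p,0) = 1`; `b_L(p,k) = 0` for `1 ≤ k ≤ p`;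
`b_L(p,p+1) = 1`; and for `n ≥ p`,
`b_L(p,n+1) = ∑_{k=0}^{n−p} C(n,k) · C(n+1,k)^L · b_L(p,k)`. -/
theorem stmt_17 (L p : ℕ) :
    bLp L p 0 = 1 ∧
    (∀ k : ℕ, 1 ≤ k → k ≤ p → bLp L p k = 0) ∧
    bLp L p (p + 1) = 1 ∧
    ∀ n : ℕ, p ≤ n →
      bLp L p (n + 1) =
        ∑ k ∈ Finset.range (n - p + 1),
          (n.choose k : ℚ) * ((n + 1).choose k : ℚ) ^ L * bLp L p k :=
  ⟨part1 L p, part2 L p, part3 L p, part4 L p⟩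
end
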